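/- Undecidability transfer via redundancy: a clause set N = {C₁,…,Cₙ} is satisfiable iff N' = {P ∨ C₁, Q ∨ C₂, C₃,…,Cₙ, ¬P, ¬Q} is satisfiable, and N' is satisfiable iff the clause P ∨ Q is non-redundant with respect to N'' = N' \ {¬P, ¬Q}, where P, Q are fresh propositional atoms maximal in the order ≺. -/
import Mathlib


/-- A propositional clause: a set of literals, i.e. of (atom, polarity) pairs. -/
abbrev PClause (Atom : Type) := Set (Atom × Bool)

/-- A valuation satisfies a clause if some literal of it is true. -/
def satC {Atom : Type} (v : Atom → Bool) (C : PClause Atom) : Prop :=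
  ∃ l ∈ C, v l.1 = l.2

/-- A valuation satisfies a clause set if it satisfies every clause. -/
def satSet {Atom : Type} (v : Atom → Bool) (M : Set (PClause Atom)) : Prop :=
  ∀ C ∈ M, satC v C

/-- Undecidability transfer via redundancy: for a clause set `N ∋ C₁, C₂` over
atoms not containing the fresh atoms `P, Q`, let
`N' = (N \ {C₁,C₂}) ∪ {P ∨ C₁, Q ∨ C₂, ¬P, ¬Q}` and `N'' = N' \ {¬P, ¬Q}`.
With an order `≺` in which `P ∨ Q` is maximal (every clause of `N''` is `≼ P ∨ Q`),
(1) `N` is satisfiable iff `N'` is satisfiable, and (2) `N'` is satisfiable iff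
`P ∨ Q` is non-redundant w.r.t. `N''`, i.e. `N''^{≼ P∨Q} ⊭ P ∨ Q`. -/
theorem redundancy_undecidability_transfer
    (Atom : Type) (P Q : Atom) (hPQ : P ≠ Q)
    (N : Set (PClause Atom))
    (hfreshP : ∀ C ∈ N, ∀ b : Bool, (P, b) ∉ C)
    (hfreshQ : ∀ C ∈ N, ∀ b : Bool, (Q, b) ∉ C)
    (C₁ C₂ : PClause Atom) (hC₁ : C₁ ∈ N) (hC₂ : C₂ ∈ N)
    (le : PClause Atom → PClause Atom → Prop)
    (N' : Set (PClause Atom))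
    (hN' : N' = (N \ {C₁, C₂}) ∪
      {insert (P, true) C₁, insert (Q, true) C₂, {(P, false)}, {(Q, false)}})
    (N'' : Set (PClause Atom))
    (hN'' : N'' = N' \ {{(P, false)}, {(Q, false)}})
    (PQ : PClause Atom) (hPQdef : PQ = {(P, true), (Q, true)})
    (hmax : ∀ C ∈ N'', le C PQ) :
    ((∃ v : Atom → Bool, satSet v N) ↔ (∃ v : Atom → Bool, satSet v N')) ∧
    ((∃ v : Atom → Bool, satSet v N') ↔
      ¬ (∀ v : Atom → Bool, satSet v {C | C ∈ N'' ∧ le C PQ} → satC v PQ)) := by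
  classical
  -- atoms of clauses of N are different from P and Q
  have hatom : ∀ C ∈ N, ∀ l ∈ C, l.1 ≠ P ∧ l.1 ≠ Q := by
    intro C hC l hl
    obtain ⟨a, b⟩ := l
    exact ⟨fun h => hfreshP C hC b (h ▸ hl), fun h => hfreshQ C hC b (h ▸ hl)⟩
  -- a model of N extends to a model of N' (make P, Q false)
  have ext1 : (∃ v : Atom → Bool, satSet v N) → (∃ v : Atom → Bool, satSet v N') := by
    rintro ⟨v, hv⟩
    set v' : Atom → Bool := fun a => if a = P ∨ a = Q then false else v a with hv'
    have hsame : ∀ C ∈ N, satC v C → satC v' C := by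
      rintro C hC ⟨l, hl, hvl⟩
      refine ⟨l, hl, ?_⟩
      have := hatom C hC l hl
      simp [hv', this.1, this.2, hvl]
    refine ⟨v', ?_⟩
    intro C hC
    rw [hN'] at hC
    rcases hC with ⟨hCN, _⟩ | hC
    · exact hsame C hCN (hv C hCN)
    · simp only [Set.mem_insert_iff, Set.mem_singleton_iff] at hC
      rcases hC with rfl | rfl | rfl | rfl
      · obtain ⟨l, hl, hvl⟩ := hsame C₁ hC₁ (hv C₁ hC₁)
        exact ⟨l, Set.mem_insert_of_mem _ hl, hvl⟩
      · obtain ⟨l, hl, hvl⟩ := hsame C₂ hC₂ (hv C₂ hC₂)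
        exact ⟨l, Set.mem_insert_of_mem _ hl, hvl⟩
      · exact ⟨(P, false), rfl, by simp [hv']⟩
      · exact ⟨(Q, false), rfl, by simp [hv']⟩
  -- a model of N' is a model of N
  have res1 : (∃ v : Atom → Bool, satSet v N') → (∃ v : Atom → Bool, satSet v N) := by
    rintro ⟨v, hv⟩
    have hvP : v P = false := by
      obtain ⟨l, hl, hvl⟩ := hv {(P, false)} (by rw [hN']; right; simp)
      simp only [Set.mem_singleton_iff] at hl
      subst hl; exact hvl
    have hvQ : v Q = false := by
      obtain ⟨l, hl, hvl⟩ := hv {(Q, false)} (by rw [hN']; right; simp)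
      simp only [Set.mem_singleton_iff] at hl
      subst hl; exact hvl
    refine ⟨v, fun C hC => ?_⟩
    by_cases h1 : C = C₁
    · obtain ⟨l, hl, hvl⟩ := hv (insert (P, true) C₁) (by rw [hN']; right; simp)
      rcases hl with rfl | hl
      · simp [hvP] at hvl
      · exact ⟨l, h1 ▸ hl, hvl⟩
    by_cases h2 : C = C₂
    · obtain ⟨l, hl, hvl⟩ := hv (insert (Q, true) C₂) (by rw [hN']; right; simp)
      rcases hl with rfl | hl
      · simp [hvQ] at hvl
      · exact ⟨l, h2 ▸ hl, hvl⟩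
    · exact hv C (by rw [hN']; left; exact ⟨hC, by simp [h1, h2]⟩)
  have hset : {C | C ∈ N'' ∧ le C PQ} = N'' := by
    ext C; exact ⟨fun h => h.1, fun h => ⟨h, hmax C h⟩⟩
  refine ⟨⟨ext1, res1⟩, ?_⟩
  rw [hset]
  constructor
  · rintro ⟨v, hv⟩ hall
    have hvP : v P = false := by
      obtain ⟨l, hl, hvl⟩ := hv {(P, false)} (by rw [hN']; right; simp)
      simp only [Set.mem_singleton_iff] at hl
      subst hl; exact hvl
    have hvQ : v Q = false := by
      obtain ⟨l, hl, hvl⟩ := hv {(Q, false)} (by rw [hN']; right; simp)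
      simp only [Set.mem_singleton_iff] at hl
      subst hl; exact hvl
    have : satC v PQ := hall v (fun C hC => hv C (by rw [hN''] at hC; exact hC.1))
    obtain ⟨l, hl, hvl⟩ := this
    rw [hPQdef] at hl
    rcases hl with rfl | hl
    · simp [hvP] at hvl
    · simp only [Set.mem_singleton_iff] at hl
      subst hl; simp [hvQ] at hvl
  · intro h
    push_neg at h
    obtain ⟨v, hv, hnPQ⟩ := h
    have hvP : v P = false := by
      by_contra hc
      exact hnPQ ⟨(P, true), by rw [hPQdef]; simp, by simpa using hc⟩
    have hvQ : v Q = false := by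
      by_contra hc
      exact hnPQ ⟨(Q, true), by rw [hPQdef]; simp, by simpa using hc⟩
    refine ⟨v, fun C hC => ?_⟩
    by_cases hC' : C ∈ ({{(P, false)}, {(Q, false)}} : Set (PClause Atom))
    · rcases hC' with rfl | hC'
      · exact ⟨(P, false), rfl, hvP⟩
      · simp only [Set.mem_singleton_iff] at hC'
        subst hC'; exact ⟨(Q, false), rfl, hvQ⟩
    · exact hv C (by rw [hN'']; exact ⟨hC, hC'⟩)
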